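/- Let t and δ be real numbers with 0 ≤ δ ≤ t < 1/2. Then ln((1/2 − δ + t)/(1/2 − t)) ≥ 4·(t − δ). -/

import Mathlib

private lemma aux13 (s : ℝ) (hs : 0 ≤ s) : (1 - s) * Real.exp (2 * s) ≤ 1 + s := by
  have key : ∀ x : ℝ, HasDerivAt (fun x => (1 + x) * Real.exp (-(2 * x)) - (1 - x))
      (1 - (1 + 2 * x) * Real.exp (-(2 * x))) x := by
    intro x
    have h1 : HasDerivAt (fun x : ℝ => -(2 * x)) (-2) x := by
      simpa using ((hasDerivAt_id x).const_mul (-2 : ℝ))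
    have h2 : HasDerivAt (fun x : ℝ => Real.exp (-(2 * x)))
        (Real.exp (-(2 * x)) * (-2)) x := h1.exp
    have h3 : HasDerivAt (fun x : ℝ => 1 + x) 1 x := by
      simpa using (hasDerivAt_id x).const_add (1 : ℝ)
    have h5 : HasDerivAt (fun x : ℝ => 1 - x) (-1) x := by
      simpa using (hasDerivAt_id x).const_sub (1 : ℝ)
    have h6 := (h3.mul h2).sub h5
    refine h6.congr_deriv ?_
    ring
  have mono : Monotone (fun x => (1 + x) * Real.exp (-(2 * x)) - (1 - x)) := by
    apply monotone_of_deriv_nonneg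
    · exact fun x => (key x).differentiableAt
    · intro x
      rw [(key x).deriv]
      have hle := Real.add_one_le_exp (2 * x)
      have hpos : 0 < Real.exp (-(2 * x)) := Real.exp_pos _
      have : Real.exp (-(2 * x)) * Real.exp (2 * x) = 1 := by
        rw [← Real.exp_add]; simp
      nlinarith
  have h0 := mono hs
  simp only [mul_zero, neg_zero, Real.exp_zero] at h0
  have hexp : Real.exp (-(2 * s)) * Real.exp (2 * s) = 1 := by
    rw [← Real.exp_add]; simp
  nlinarith [Real.exp_pos (2 * s), Real.exp_pos (-(2 * s))]

/-- If `0 ≤ δ ≤ t < 1/2`, then `ln((1/2 − δ + t)/(1/2 − t)) ≥ 4(t − δ)`. -/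
theorem stmt_13 (t δ : ℝ) (hδ0 : 0 ≤ δ) (hδt : δ ≤ t) (ht : t < 1 / 2) :
    4 * (t - δ) ≤ Real.log ((1 / 2 - δ + t) / (1 / 2 - t)) := by
  have hD : (0 : ℝ) < 1 / 2 - t := by linarith
  have hN : (0 : ℝ) < 1 / 2 - δ + t := by linarith
  have h1δ : (0 : ℝ) < 1 - δ := by linarith
  set s : ℝ := (2 * t - δ) / (1 - δ) with hs_def
  have hs_eq : s * (1 - δ) = 2 * t - δ := div_mul_cancel₀ _ (ne_of_gt h1δ)
  have hs0 : 0 ≤ s := div_nonneg (by linarith) h1δ.le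
  have h := aux13 s hs0
  rw [Real.le_log_iff_exp_le (div_pos hN hD)]
  have h2s : 4 * (t - δ) ≤ 2 * s := by
    nlinarith
  have hmono : Real.exp (4 * (t - δ)) ≤ Real.exp (2 * s) := Real.exp_le_exp.mpr h2s
  have hratio : Real.exp (2 * s) ≤ (1 / 2 - δ + t) / (1 / 2 - t) := by
    rw [le_div_iff₀ hD]
    nlinarith [mul_le_mul_of_nonneg_right h h1δ.le, Real.exp_pos (2 * s)]
  exact hmono.trans hratio
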